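/- Let a₁, a₂ ∈ ℝ³ lie in the xy-plane with |a₁+a₂|+|a₁−a₂| > 2. If the plane R through the origin has normal vector n in the xy-plane (θ = π/2 in spherical coordinates), then |P_R(a₁+a₂)| + |P_R(a₁−a₂)| ≤ 2, where P_R is the orthogonal projection onto R. Consequently f(φ, π/2) ≥ 0 for all φ. -/

import Mathlib

open Real

/-- The vector `(v₀, v₁, v₂)` in Euclidean `ℝ³`. -/
noncomputable def e3 (v : Fin 3 → ℝ) : EuclideanSpace ℝ (Fin 3) :=
  (WithLp.equiv 2 (Fin 3 → ℝ)).symm v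

/-- Orthogonal projection of `ℝ³` onto the plane with unit normal `nv`. -/
noncomputable def projPlane (nv v : EuclideanSpace ℝ (Fin 3)) : EuclideanSpace ℝ (Fin 3) :=
  v - (inner ℝ v nv : ℝ) • nv

lemma key (φ : ℝ) (v : EuclideanSpace ℝ (Fin 3)) (hv : v 2 = 0) :
    ‖projPlane (e3 ![cos φ, sin φ, 0]) v‖ = |v 1 * cos φ - v 0 * sin φ| := by
  have hc : (inner ℝ v (e3 ![cos φ, sin φ, 0]) : ℝ) = v 0 * cos φ + v 1 * sin φ := by
    simp [e3, PiLp.inner_apply, Fin.sum_univ_three, mul_comm]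
  rw [EuclideanSpace.norm_eq]
  have p0 : projPlane (e3 ![cos φ, sin φ, 0]) v 0 = v 0 - (v 0 * cos φ + v 1 * sin φ) * cos φ := by
    simp [projPlane, e3, PiLp.inner_apply, Fin.sum_univ_three, mul_comm]
  have p1 : projPlane (e3 ![cos φ, sin φ, 0]) v 1 = v 1 - (v 0 * cos φ + v 1 * sin φ) * sin φ := by
    simp [projPlane, e3, PiLp.inner_apply, Fin.sum_univ_three, mul_comm]
  have p2 : projPlane (e3 ![cos φ, sin φ, 0]) v 2 = 0 := by
    simp [projPlane, hc, e3, hv]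
  rw [Fin.sum_univ_three, p0, p1, p2]
  have hs : sin φ ^ 2 + cos φ ^ 2 = 1 := sin_sq_add_cos_sq φ
  have : ‖v 0 - (v 0 * cos φ + v 1 * sin φ) * cos φ‖ ^ 2
      + ‖v 1 - (v 0 * cos φ + v 1 * sin φ) * sin φ‖ ^ 2
      + ‖(0:ℝ)‖ ^ 2
      = (v 1 * cos φ - v 0 * sin φ) ^ 2 := by
    simp only [Real.norm_eq_abs, sq_abs, norm_zero]
    linear_combination ((v 0 * cos φ + v 1 * sin φ)^2 - v 0 ^ 2 - v 1 ^ 2) * hs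
  rw [this, Real.sqrt_sq_eq_abs]


/-- If `a₁, a₂` lie in the `xy`-plane with `|a₁+a₂| + |a₁−a₂| > 2` and the plane `R`
has its normal `n = (cos φ, sin φ, 0)` in the `xy`-plane, then
`|P_R(a₁+a₂)| + |P_R(a₁−a₂)| ≤ 2`. -/
theorem stmt8 (a₁ a₂ : EuclideanSpace ℝ (Fin 3)) (φ : ℝ)
    (hz₁ : a₁ 2 = 0) (hz₂ : a₂ 2 = 0)
    (h₁ : ‖a₁‖ ≤ 1) (h₂ : ‖a₂‖ ≤ 1)
    (hinc : ‖a₁ + a₂‖ + ‖a₁ - a₂‖ > 2) :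
    ‖projPlane (e3 ![cos φ, sin φ, 0]) (a₁ + a₂)‖
      + ‖projPlane (e3 ![cos φ, sin φ, 0]) (a₁ - a₂)‖ ≤ 2 := by
  have hadd : (a₁ + a₂) 2 = 0 := by simp [hz₁, hz₂]
  have hsub : (a₁ - a₂) 2 = 0 := by simp [hz₁, hz₂]
  rw [key φ _ hadd, key φ _ hsub]
  have e1 : (a₁ + a₂) 0 = a₁ 0 + a₂ 0 := rfl
  have e2 : (a₁ + a₂) 1 = a₁ 1 + a₂ 1 := rfl
  have e3' : (a₁ - a₂) 0 = a₁ 0 - a₂ 0 := rfl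
  have e4 : (a₁ - a₂) 1 = a₁ 1 - a₂ 1 := rfl
  rw [e1, e2, e3', e4]
  set t₁ := a₁ 1 * cos φ - a₁ 0 * sin φ with ht₁
  set t₂ := a₂ 1 * cos φ - a₂ 0 * sin φ with ht₂
  have hs : sin φ ^ 2 + cos φ ^ 2 = 1 := sin_sq_add_cos_sq φ
  have bound : ∀ a : EuclideanSpace ℝ (Fin 3), a 2 = 0 → ‖a‖ ≤ 1 →
      |a 1 * cos φ - a 0 * sin φ| ≤ 1 := by
    intro a h0 hle
    have hn : ‖a‖ ^ 2 = a 0 ^ 2 + a 1 ^ 2 := by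
      rw [EuclideanSpace.norm_eq, Real.sq_sqrt (by positivity)]
      simp [Fin.sum_univ_three, h0, sq_abs]
    have : a 0 ^ 2 + a 1 ^ 2 ≤ 1 := by
      rw [← hn]; nlinarith [norm_nonneg a]
    rw [abs_le]; constructor <;> nlinarith [sq_nonneg (a 0 * cos φ + a 1 * sin φ), sq_nonneg (a 1 * cos φ - a 0 * sin φ + 1), sq_nonneg (a 1 * cos φ - a 0 * sin φ - 1)]
  have b1 := bound a₁ hz₁ h₁
  have b2 := bound a₂ hz₂ h₂
  have h1' : |t₁| ≤ 1 := b1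
  have h2' : |t₂| ≤ 1 := b2
  have eq1 : (a₁ 1 + a₂ 1) * cos φ - (a₁ 0 + a₂ 0) * sin φ = t₁ + t₂ := by ring
  have eq2 : (a₁ 1 - a₂ 1) * cos φ - (a₁ 0 - a₂ 0) * sin φ = t₁ - t₂ := by ring
  rw [eq1, eq2]
  rw [abs_le] at h1' h2'
  rcases abs_cases (t₁ + t₂) with ⟨e, _⟩ | ⟨e, _⟩ <;> rcases abs_cases (t₁ - t₂) with ⟨f, _⟩ | ⟨f, _⟩ <;> rw [e, f] <;> linarith [h1'.1, h1'.2, h2'.1, h2'.2]
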